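/- arXiv:2303.11876 — 2 statements merged into one kernel-verified Lean document; each statement's English description precedes it below -/
import Mathlib

section
/- From rational to polynomial SDEs: let K be a field of characteristic 0, let f₁,...,fₙ and g be polynomials in the variables x, y₀₁,...,y₀ₙ, y₁,...,yₙ with coefficients in K, and let r₀ = (r₀₁,...,r₀ₙ) ∈ Kⁿ be such that g(0, r₀, r₀) ≠ 0. Then there exists a polynomial h in the variables x, y₀₁,...,y₀ₙ, y₁,...,yₙ, w with coefficients in K (independent of any particular stream) such that: (i) for every tuple of streams σ = (σ₁,...,σₙ) satisfying σᵢ' = fᵢ(X, r₀, σ) · g(X, r₀, σ)⁻¹ and σᵢ(0) = r₀ᵢ for all i, the tuple (σ, τ) with τ := g(X, r₀, σ)⁻¹ is the unique tuple of streams satisfying σᵢ' = fᵢ(X, r₀, σ) · τ, σᵢ(0) = r₀ᵢ for all i, together with τ' = −g(0, r₀, r₀)⁻¹ · h(X, r₀, σ, τ) · τ and τ(0) = g(0, r₀, r₀)⁻¹; and (ii) conversely, for any tuple of streams (σ, τ) satisfying this polynomial system, σ satisfies σᵢ' = fᵢ(X, r₀, σ) · g(X, r₀, σ)⁻¹ and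 σᵢ(0) = r₀ᵢ for all i. -/
/-- Stream derivative: remove the first coefficient. -/
noncomputable def sderiv {K : Type*} [Field K] (σ : PowerSeries K) : PowerSeries K :=
  PowerSeries.mk fun k => PowerSeries.coeff (k + 1) σ

/-- Variable set `x, y₀₁,...,y₀ₙ, y₁,...,yₙ`. -/
abbrev VarV (n : ℕ) := Unit ⊕ (Fin n ⊕ Fin n)

/-- Variable set `x, y₀₁,...,y₀ₙ, y₁,...,yₙ, w`. -/
abbrev VarW (n : ℕ) := VarV n ⊕ Unit

/-- Evaluation of a polynomial in `x, y₀, y` at `x := X`, `y₀ᵢ := C r₀ᵢ`, `yᵢ := σᵢ`. -/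
noncomputable def evalV {K : Type*} [Field K] {n : ℕ}
    (f : MvPolynomial (VarV n) K) (r0 : Fin n → K) (σ : Fin n → PowerSeries K) :
    PowerSeries K :=
  MvPolynomial.aeval
    (Sum.elim (fun _ => PowerSeries.X)
      (Sum.elim (fun i => PowerSeries.C (r0 i)) σ)) f

/-- Evaluation of a polynomial in `x, y₀, y` at `x := 0`, `y₀ᵢ := r₀ᵢ`, `yᵢ := r₀ᵢ` in `K`. -/
noncomputable def evalVK {K : Type*} [Field K] {n : ℕ}
    (f : MvPolynomial (VarV n) K) (r0 : Fin n → K) : K :=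
  MvPolynomial.eval (Sum.elim (fun _ => (0 : K)) (Sum.elim r0 r0)) f

/-- Evaluation of a polynomial in `x, y₀, y, w` at `x := X`, `y₀ᵢ := C r₀ᵢ`, `yᵢ := σᵢ`,
`w := τ`. -/
noncomputable def evalW {K : Type*} [Field K] {n : ℕ}
    (h : MvPolynomial (VarW n) K) (r0 : Fin n → K) (σ : Fin n → PowerSeries K)
    (τ : PowerSeries K) : PowerSeries K :=
  MvPolynomial.aeval
    (Sum.elim
      (Sum.elim (fun _ => PowerSeries.X)
        (Sum.elim (fun i => PowerSeries.C (r0 i)) σ))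
      (fun _ => τ)) h

/-- The polynomial SDE system `σᵢ' = fᵢ(X,r₀,σ)·τ, σᵢ(0) = r₀ᵢ,
`τ' = -g(0,r₀,r₀)⁻¹ · h(X,r₀,σ,τ) · τ`, `τ(0) = g(0,r₀,r₀)⁻¹`. -/
def PolySys {K : Type*} [Field K] {n : ℕ}
    (f : Fin n → MvPolynomial (VarV n) K) (g : MvPolynomial (VarV n) K)
    (h : MvPolynomial (VarW n) K) (r0 : Fin n → K)
    (σ : Fin n → PowerSeries K) (τ : PowerSeries K) : Prop :=
  (∀ i, sderiv (σ i) = evalV (f i) r0 σ * τ ∧ PowerSeries.coeff 0 (σ i) = r0 i) ∧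
  sderiv τ = PowerSeries.C (-(evalVK g r0)⁻¹) * evalW h r0 σ τ * τ ∧
  PowerSeries.coeff 0 τ = (evalVK g r0)⁻¹

namespace SDEAux
open PowerSeries MvPolynomial

variable {K : Type*} [Field K]

lemma coeff_sderiv (σ : PowerSeries K) (k : ℕ) :
    PowerSeries.coeff k (sderiv σ) = PowerSeries.coeff (k + 1) σ := by
  simp [sderiv]

lemma X_mul_sderiv (σ : PowerSeries K) :
    (X : PowerSeries K) * sderiv σ = σ - PowerSeries.C (PowerSeries.constantCoeff σ) := by
  ext k
  cases k with
  | zero => simp [coeff_zero_eq_constantCoeff]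
  | succ k => simp [coeff_succ_X_mul, coeff_sderiv, PowerSeries.coeff_C]

lemma sderiv_mul (a b : PowerSeries K) :
    sderiv (a * b) = sderiv a * b + PowerSeries.C (PowerSeries.constantCoeff a) * sderiv b := by
  apply mul_left_cancel₀ (PowerSeries.X_ne_zero (R := K))
  rw [X_mul_sderiv, mul_add, ← mul_assoc, X_mul_sderiv, mul_left_comm, X_mul_sderiv,
    map_mul (PowerSeries.constantCoeff), map_mul (PowerSeries.C)]
  ring

lemma sderiv_one : sderiv (1 : PowerSeries K) = 0 := by
  ext k; simp [coeff_sderiv, PowerSeries.coeff_one]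

lemma eq_C_of_sderiv_eq_zero {ρ : PowerSeries K} (h : sderiv ρ = 0) :
    ρ = PowerSeries.C (PowerSeries.constantCoeff ρ) := by
  have := X_mul_sderiv ρ
  rw [h, mul_zero] at this
  linear_combination -this

lemma eq_zero_of_forall_X_pow_dvd {ρ : PowerSeries K}
    (h : ∀ k : ℕ, (X : PowerSeries K) ^ k ∣ ρ) : ρ = 0 := by
  ext m
  have := PowerSeries.X_pow_dvd_iff.mp (h (m + 1)) m (Nat.lt_succ_self m)
  simpa using this

lemma X_pow_dvd_aeval_sub {ι : Type*} (v₁ v₂ : ι → PowerSeries K) (k : ℕ)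
    (hv : ∀ j, (X : PowerSeries K) ^ k ∣ (v₁ j - v₂ j)) (p : MvPolynomial ι K) :
    (X : PowerSeries K) ^ k ∣ (MvPolynomial.aeval v₁ p - MvPolynomial.aeval v₂ p) := by
  induction p using MvPolynomial.induction_on with
  | C a => simp
  | add p q hp hq =>
    have := dvd_add hp hq
    convert this using 1
    rw [map_add, map_add]; ring
  | mul_X p j hp =>
    simp only [map_mul, aeval_X]
    have hr : MvPolynomial.aeval v₁ p * v₁ j - MvPolynomial.aeval v₂ p * v₂ j
        = (MvPolynomial.aeval v₁ p - MvPolynomial.aeval v₂ p) * v₁ j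
          + MvPolynomial.aeval v₂ p * (v₁ j - v₂ j) := by ring
    rw [hr]
    exact dvd_add (hp.mul_right _) ((hv j).mul_left _)

lemma X_pow_dvd_mul_sub_mul {k : ℕ} {a₁ a₂ b₁ b₂ : PowerSeries K}
    (ha : (X : PowerSeries K) ^ k ∣ (a₁ - a₂)) (hb : (X : PowerSeries K) ^ k ∣ (b₁ - b₂)) :
    (X : PowerSeries K) ^ k ∣ (a₁ * b₁ - a₂ * b₂) := by
  have : a₁ * b₁ - a₂ * b₂ = (a₁ - a₂) * b₁ + a₂ * (b₁ - b₂) := by ring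
  rw [this]
  exact dvd_add (ha.mul_right _) (hb.mul_left _)

end SDEAux

section MoreAux
open PowerSeries MvPolynomial SDEAux

variable {K : Type*} [Field K] {n : ℕ}

lemma constantCoeff_evalV (p : MvPolynomial (VarV n) K) (r0 : Fin n → K)
    (σ : Fin n → PowerSeries K) (hσ : ∀ i, PowerSeries.coeff 0 (σ i) = r0 i) :
    PowerSeries.constantCoeff (evalV p r0 σ) = evalVK p r0 := by
  have hσ' : ∀ i, PowerSeries.constantCoeff (σ i) = r0 i := by
    intro i; rw [← PowerSeries.coeff_zero_eq_constantCoeff_apply]; exact hσ i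
  induction p using MvPolynomial.induction_on with
  | C a => simp [evalV, evalVK, PowerSeries.algebraMap_apply]
  | add p q hp hq => simp only [evalV, evalVK, map_add] at *; rw [hp, hq]
  | mul_X p j hp =>
    rcases j with _ | (i | i) <;>
      simp only [evalV, evalVK, map_mul, aeval_X, eval_X, Sum.elim_inl, Sum.elim_inr] at * <;>
      simp [hp, hσ']


lemma polySys_unique (f : Fin n → MvPolynomial (VarV n) K) (g : MvPolynomial (VarV n) K)
    (h : MvPolynomial (VarW n) K) (r0 : Fin n → K)
    (σ₁ : Fin n → PowerSeries K) (τ₁ : PowerSeries K)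
    (σ₂ : Fin n → PowerSeries K) (τ₂ : PowerSeries K)
    (H1 : PolySys f g h r0 σ₁ τ₁) (H2 : PolySys f g h r0 σ₂ τ₂) :
    σ₁ = σ₂ ∧ τ₁ = τ₂ := by
  have key : ∀ k : ℕ, (∀ i, (X : PowerSeries K) ^ k ∣ (σ₁ i - σ₂ i)) ∧
      (X : PowerSeries K) ^ k ∣ (τ₁ - τ₂) := by
    intro k
    induction k with
    | zero => simp
    | succ k ih =>
      have step : ∀ ρ : PowerSeries K, (X : PowerSeries K) ^ k ∣ ρ →
          PowerSeries.coeff k ρ = 0 → (X : PowerSeries K) ^ (k + 1) ∣ ρ := by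
        intro ρ h1 h2
        rw [PowerSeries.X_pow_dvd_iff]
        intro m hm
        rcases Nat.lt_succ_iff_lt_or_eq.mp hm with hm | rfl
        · exact PowerSeries.X_pow_dvd_iff.mp h1 m hm
        · exact h2
      have hcoeff : (∀ i, PowerSeries.coeff k (σ₁ i - σ₂ i) = 0) ∧
          PowerSeries.coeff k (τ₁ - τ₂) = 0 := by
        cases k with
        | zero =>
          constructor
          · intro i
            rw [map_sub, (H1.1 i).2, (H2.1 i).2, sub_self]
          · rw [map_sub, H1.2.2, H2.2.2, sub_self]
        | succ m =>
          have hV : ∀ p : MvPolynomial (VarV n) K,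
              (X : PowerSeries K) ^ (m + 1) ∣ (evalV p r0 σ₁ - evalV p r0 σ₂) := by
            intro p
            apply X_pow_dvd_aeval_sub
            intro j
            rcases j with _ | (i | i)
            · simp
            · simp
            · simpa using ih.1 i
          have hW : (X : PowerSeries K) ^ (m + 1) ∣ (evalW h r0 σ₁ τ₁ - evalW h r0 σ₂ τ₂) := by
            apply X_pow_dvd_aeval_sub
            intro j
            rcases j with (_ | (i | i)) | _
            · simp
            · simp
            · simpa using ih.1 i
            · simpa using ih.2
          constructor
          · intro i
            rw [map_sub, ← coeff_sderiv, ← coeff_sderiv, (H1.1 i).1, (H2.1 i).1, ← map_sub]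
            exact PowerSeries.X_pow_dvd_iff.mp
              (X_pow_dvd_mul_sub_mul (hV (f i)) ih.2) m (Nat.lt_succ_self m)
          · rw [map_sub, ← coeff_sderiv, ← coeff_sderiv, H1.2.1, H2.2.1, ← map_sub]
            have hd : (X : PowerSeries K) ^ (m + 1) ∣
                (PowerSeries.C (-(evalVK g r0)⁻¹) * evalW h r0 σ₁ τ₁ * τ₁ -
                 PowerSeries.C (-(evalVK g r0)⁻¹) * evalW h r0 σ₂ τ₂ * τ₂) := by
              have hdd := (X_pow_dvd_mul_sub_mul hW ih.2).mul_left
                (PowerSeries.C (-(evalVK g r0)⁻¹))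
              convert hdd using 1
              ring
            exact PowerSeries.X_pow_dvd_iff.mp hd m (Nat.lt_succ_self m)
      exact ⟨fun i => step _ (ih.1 i) (hcoeff.1 i), step _ ih.2 hcoeff.2⟩
  constructor
  · funext i
    have := eq_zero_of_forall_X_pow_dvd (fun k => (key k).1 i)
    exact sub_eq_zero.mp this
  · exact sub_eq_zero.mp (eq_zero_of_forall_X_pow_dvd fun k => (key k).2)

end MoreAux

/-- From rational to polynomial SDEs. -/
theorem rational_to_polynomial_SDE {K : Type*} [Field K] [CharZero K] {n : ℕ}
    (f : Fin n → MvPolynomial (VarV n) K) (g : MvPolynomial (VarV n) K)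
    (r0 : Fin n → K) (hg : evalVK g r0 ≠ 0) :
    ∃ h : MvPolynomial (VarW n) K,
      (∀ σ : Fin n → PowerSeries K,
        (∀ i, sderiv (σ i) = evalV (f i) r0 σ * (evalV g r0 σ)⁻¹ ∧
              PowerSeries.coeff 0 (σ i) = r0 i) →
        (PolySys f g h r0 σ (evalV g r0 σ)⁻¹ ∧
          ∀ (σ₂ : Fin n → PowerSeries K) (τ₂ : PowerSeries K),
            PolySys f g h r0 σ₂ τ₂ → σ₂ = σ ∧ τ₂ = (evalV g r0 σ)⁻¹)) ∧
      (∀ (σ : Fin n → PowerSeries K) (τ : PowerSeries K),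
        PolySys f g h r0 σ τ →
        ∀ i, sderiv (σ i) = evalV (f i) r0 σ * (evalV g r0 σ)⁻¹ ∧
             PowerSeries.coeff 0 (σ i) = r0 i) := by
  classical
  set u : VarV n → MvPolynomial (VarV n) K :=
    Sum.elim (fun _ => 0)
      (Sum.elim (fun i => MvPolynomial.X (Sum.inr (Sum.inl i)))
        (fun i => MvPolynomial.X (Sum.inr (Sum.inl i)))) with hu
  set gens : (Unit ⊕ Fin n) → MvPolynomial (VarV n) K :=
    Sum.elim (fun _ => MvPolynomial.X (Sum.inl ()))
      (fun i => MvPolynomial.X (Sum.inr (Sum.inr i)) - MvPolynomial.X (Sum.inr (Sum.inl i)))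
      with hgens
  have hmem : ∀ p : MvPolynomial (VarV n) K,
      p - MvPolynomial.aeval u p ∈ Ideal.span (Set.range gens) := by
    intro p
    induction p using MvPolynomial.induction_on with
    | C a => simp [MvPolynomial.aeval_C, MvPolynomial.algebraMap_eq]
    | add p q hp hq =>
      have hsum := Ideal.add_mem _ hp hq
      convert hsum using 1
      rw [map_add]; ring
    | mul_X p j hp =>
      have hj : (MvPolynomial.X j : MvPolynomial (VarV n) K)
          - MvPolynomial.aeval (R := K) u (MvPolynomial.X j)
          ∈ Ideal.span (Set.range gens) := by
        rcases j with _ | (i | i)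
        · simpa [hu, hgens] using
            Ideal.subset_span (Set.mem_range_self (f := gens) (Sum.inl ()))
        · simp [hu]
        · simpa [hu, hgens] using
            Ideal.subset_span (Set.mem_range_self (f := gens) (Sum.inr i))
      have hsplit : p * MvPolynomial.X j - MvPolynomial.aeval u (p * MvPolynomial.X j)
          = (p - MvPolynomial.aeval u p) * MvPolynomial.X j
            + MvPolynomial.aeval u p *
              ((MvPolynomial.X j : MvPolynomial (VarV n) K)
                - MvPolynomial.aeval (R := K) u (MvPolynomial.X j)) := by
        rw [map_mul]; ring
      rw [hsplit]
      exact Ideal.add_mem _ (Ideal.mul_mem_right _ _ hp) (Ideal.mul_mem_left _ _ hj)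
  obtain ⟨c, hc⟩ := Ideal.mem_span_range_iff_exists_fun.mp (hmem g)
  set hpoly : MvPolynomial (VarW n) K :=
    MvPolynomial.rename Sum.inl (c (Sum.inl ())) +
      ∑ i : Fin n, MvPolynomial.rename Sum.inl (c (Sum.inr i) * f i) *
        MvPolynomial.X (Sum.inr ()) with hhp
  have hW_eval : ∀ (σ : Fin n → PowerSeries K) (τ : PowerSeries K),
      evalW hpoly r0 σ τ = evalV (c (Sum.inl ())) r0 σ +
        ∑ i : Fin n, evalV (c (Sum.inr i)) r0 σ * evalV (f i) r0 σ * τ := by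
    intro σ τ
    simp [hhp, evalW, evalV, map_add, map_sum, map_mul, MvPolynomial.aeval_rename,
      MvPolynomial.aeval_X, Sum.elim_comp_inl, mul_assoc]
  have hphi : ∀ (σ : Fin n → PowerSeries K) (p : MvPolynomial (VarV n) K),
      evalV (MvPolynomial.aeval u p) r0 σ = PowerSeries.C (evalVK p r0) := by
    intro σ p
    induction p using MvPolynomial.induction_on with
    | C a =>
      rw [MvPolynomial.aeval_C]
      simp [evalV, evalVK, PowerSeries.algebraMap_apply, MvPolynomial.algebraMap_eq]
    | add p q hp hq =>
      rw [map_add,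
        show evalV (MvPolynomial.aeval u p + MvPolynomial.aeval u q) r0 σ
          = evalV (MvPolynomial.aeval u p) r0 σ + evalV (MvPolynomial.aeval u q) r0 σ from
          map_add _ _ _,
        hp, hq, ← map_add,
        show evalVK (p + q) r0 = evalVK p r0 + evalVK q r0 from map_add _ _ _]
    | mul_X p j hp =>
      rw [map_mul,
        show evalV (MvPolynomial.aeval u p * MvPolynomial.aeval u (MvPolynomial.X j)) r0 σ
          = evalV (MvPolynomial.aeval u p) r0 σ
            * evalV (MvPolynomial.aeval u (MvPolynomial.X j)) r0 σ from map_mul _ _ _,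
        hp,
        show evalVK (p * MvPolynomial.X j) r0
          = evalVK p r0 * evalVK (MvPolynomial.X j) r0 from map_mul _ _ _,
        map_mul]
      congr 1
      rcases j with _ | (i | i) <;>
        · rw [MvPolynomial.aeval_X, hu]
          simp [evalV, evalVK]
  have keyderiv : ∀ (σ : Fin n → PowerSeries K) (τ : PowerSeries K),
      (∀ i, sderiv (σ i) = evalV (f i) r0 σ * τ) →
      (∀ i, PowerSeries.coeff 0 (σ i) = r0 i) →
      sderiv (evalV g r0 σ) = evalW hpoly r0 σ τ := by
    intro σ τ hσd hσ0
    apply mul_left_cancel₀ (PowerSeries.X_ne_zero (R := K))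
    rw [SDEAux.X_mul_sderiv, constantCoeff_evalV g r0 σ hσ0]
    have e1 : evalV g r0 σ - PowerSeries.C (evalVK g r0)
        = evalV (g - MvPolynomial.aeval u g) r0 σ := by
      rw [show evalV (g - MvPolynomial.aeval u g) r0 σ
          = evalV g r0 σ - evalV (MvPolynomial.aeval u g) r0 σ from map_sub _ _ _, hphi σ g]
    have e2 : evalV (∑ j, c j * gens j) r0 σ
        = ∑ j, evalV (c j) r0 σ * evalV (gens j) r0 σ := by
      simp [evalV, map_sum, map_mul]
    have hXs : ∀ i, evalV (gens (Sum.inr i)) r0 σ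
        = PowerSeries.X * (evalV (f i) r0 σ * τ) := by
      intro i
      have hcc : PowerSeries.constantCoeff (σ i) = r0 i := by
        rw [← PowerSeries.coeff_zero_eq_constantCoeff_apply]; exact hσ0 i
      have hge : evalV (gens (Sum.inr i)) r0 σ = σ i - PowerSeries.C (r0 i) := by
        rw [hgens]; simp [evalV]
      rw [hge, ← hσd i, SDEAux.X_mul_sderiv, hcc]
    have hXinl : evalV (gens (Sum.inl ())) r0 σ = PowerSeries.X := by
      rw [hgens]; simp [evalV]
    rw [e1, ← hc, e2, Fintype.sum_sum_type]
    simp only [Finset.univ_unique, Finset.sum_singleton, hXinl]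
    rw [Finset.sum_congr rfl fun i _ => by rw [hXs i]]
    rw [hW_eval, mul_add, Finset.mul_sum]
    congr 1
    · ring
    · exact Finset.sum_congr rfl fun i _ => by ring
  refine ⟨hpoly, ?_, ?_⟩
  · intro σ hσ
    have hσd : ∀ i, sderiv (σ i) = evalV (f i) r0 σ * (evalV g r0 σ)⁻¹ := fun i => (hσ i).1
    have hσ0 : ∀ i, PowerSeries.coeff 0 (σ i) = r0 i := fun i => (hσ i).2
    have hG0 : PowerSeries.constantCoeff (evalV g r0 σ) = evalVK g r0 :=
      constantCoeff_evalV g r0 σ hσ0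
    have hGne : PowerSeries.constantCoeff (evalV g r0 σ) ≠ 0 := by rw [hG0]; exact hg
    have hGmul : evalV g r0 σ * (evalV g r0 σ)⁻¹ = 1 :=
      PowerSeries.mul_inv_cancel _ hGne
    have hτ0 : PowerSeries.coeff 0 (evalV g r0 σ)⁻¹ = (evalVK g r0)⁻¹ := by
      rw [PowerSeries.coeff_zero_eq_constantCoeff_apply, PowerSeries.constantCoeff_inv, hG0]
    have hDG : sderiv (evalV g r0 σ) = evalW hpoly r0 σ (evalV g r0 σ)⁻¹ :=
      keyderiv σ _ hσd hσ0
    have heq0 : (0 : PowerSeries K) = evalW hpoly r0 σ (evalV g r0 σ)⁻¹ * (evalV g r0 σ)⁻¹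
        + PowerSeries.C (evalVK g r0) * sderiv (evalV g r0 σ)⁻¹ := by
      have hpr := SDEAux.sderiv_mul (evalV g r0 σ) (evalV g r0 σ)⁻¹
      rw [hGmul, SDEAux.sderiv_one, hDG, hG0] at hpr
      exact hpr
    have hCinv : PowerSeries.C (evalVK g r0)⁻¹ * PowerSeries.C (evalVK g r0) = 1 := by
      rw [← map_mul, inv_mul_cancel₀ hg, map_one]
    have hτd : sderiv (evalV g r0 σ)⁻¹ = PowerSeries.C (-(evalVK g r0)⁻¹) *
        evalW hpoly r0 σ (evalV g r0 σ)⁻¹ * (evalV g r0 σ)⁻¹ := by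
      rw [map_neg, neg_mul, neg_mul]
      rw [← one_mul (sderiv (evalV g r0 σ)⁻¹), ← hCinv, mul_assoc]
      rw [show PowerSeries.C (evalVK g r0) * sderiv (evalV g r0 σ)⁻¹
          = -(evalW hpoly r0 σ (evalV g r0 σ)⁻¹ * (evalV g r0 σ)⁻¹) from by
        linear_combination -heq0]
      ring
    have hPS : PolySys f g hpoly r0 σ (evalV g r0 σ)⁻¹ :=
      ⟨fun i => ⟨hσd i, hσ0 i⟩, hτd, hτ0⟩
    exact ⟨hPS, fun σ₂ τ₂ H2 => polySys_unique f g hpoly r0 σ₂ τ₂ σ _ H2 hPS⟩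
  · intro σ τ Hp
    obtain ⟨hσp, hτd, hτ0⟩ := Hp
    have hσd : ∀ i, sderiv (σ i) = evalV (f i) r0 σ * τ := fun i => (hσp i).1
    have hσ0 : ∀ i, PowerSeries.coeff 0 (σ i) = r0 i := fun i => (hσp i).2
    have hG0 : PowerSeries.constantCoeff (evalV g r0 σ) = evalVK g r0 :=
      constantCoeff_evalV g r0 σ hσ0
    have hGne : PowerSeries.constantCoeff (evalV g r0 σ) ≠ 0 := by rw [hG0]; exact hg
    have hDG : sderiv (evalV g r0 σ) = evalW hpoly r0 σ τ := keyderiv σ τ hσd hσ0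
    have hC1 : PowerSeries.C (evalVK g r0) * PowerSeries.C (-(evalVK g r0)⁻¹)
        = -1 := by
      rw [← map_mul, ← map_one (PowerSeries.C), ← map_neg]
      congr 1
      field_simp
    have hder : sderiv (evalV g r0 σ * τ) = 0 := by
      rw [SDEAux.sderiv_mul, hDG, hτd, hG0]
      linear_combination (evalW hpoly r0 σ τ * τ) * hC1
    have hcc1 : PowerSeries.constantCoeff (evalV g r0 σ * τ) = 1 := by
      rw [map_mul, hG0, ← PowerSeries.coeff_zero_eq_constantCoeff_apply, hτ0,
        mul_inv_cancel₀ hg]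
    have hGτ : evalV g r0 σ * τ = 1 := by
      rw [SDEAux.eq_C_of_sderiv_eq_zero hder, hcc1, map_one]
    have hτ : τ = (evalV g r0 σ)⁻¹ := by
      have h2 : (evalV g r0 σ)⁻¹ * (evalV g r0 σ * τ) = (evalV g r0 σ)⁻¹ := by
        rw [hGτ, mul_one]
      rw [← h2, ← mul_assoc, mul_comm (evalV g r0 σ)⁻¹ (evalV g r0 σ),
        PowerSeries.mul_inv_cancel _ hGne, one_mul]
    intro i
    exact ⟨by rw [← hτ]; exact hσd i, hσ0 i⟩
end

section
/- Guarded polynomial systems have unique stream solutions given by the associated SDEs: let K be a field of characteristic 0, let p₁,...,pₙ be polynomials in the variables x, y₁, ..., yₙ with coefficients in K and c = (c₁,...,cₙ) ∈ Kⁿ. Then there exists a unique tuple of streams σ = (σ₁,...,σₙ) over K such that σᵢ = C(cᵢ) + X · pᵢ(X, σ) for every i; moreover this σ is the unique tuple of streams satisfying σᵢ(0) = cᵢ and σᵢ' = pᵢ(X, σ) for every i. -/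
/-- Evaluation of a polynomial in `x, y₁, ..., yₙ` (variable `0` playing the role of `x`)
at `x := X` and `yᵢ := σᵢ`. -/
noncomputable def polyEval {K : Type*} [Field K] {n : ℕ}
    (p : MvPolynomial (Fin (n + 1)) K) (σ : Fin n → PowerSeries K) : PowerSeries K :=
  MvPolynomial.aeval (Fin.cons PowerSeries.X σ) p

lemma coeff_polyEval_congr {K : Type*} [Field K] {n : ℕ}
    (q : MvPolynomial (Fin (n + 1)) K) (σ σ₂ : Fin n → PowerSeries K) :
    ∀ m : ℕ, (∀ i, ∀ j ≤ m, PowerSeries.coeff j (σ i) = PowerSeries.coeff j (σ₂ i)) →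
      PowerSeries.coeff m (polyEval q σ) = PowerSeries.coeff m (polyEval q σ₂) := by
  induction q using MvPolynomial.induction_on with
  | C a => intro m h; simp [polyEval]
  | add q r hq hr =>
    intro m h
    simp only [polyEval, map_add] at *
    rw [hq m h, hr m h]
  | mul_X q s hq =>
    intro m h
    simp only [polyEval, map_mul, MvPolynomial.aeval_X] at *
    rw [PowerSeries.coeff_mul, PowerSeries.coeff_mul]
    apply Finset.sum_congr rfl
    intro ab hab
    replace hab : ab.1 + ab.2 = m := Finset.HasAntidiagonal.mem_antidiagonal.mp hab
    have h1 : ab.1 ≤ m := by omega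
    have h2 : ab.2 ≤ m := by omega
    rw [hq ab.1 (fun i j hj => h i j (le_trans hj h1))]
    congr 1
    refine Fin.cases ?_ ?_ s
    · simp
    · intro i
      simp only [Fin.cons_succ]
      exact h i ab.2 h2

lemma guarded_iff {K : Type*} [Field K] (σ τ : PowerSeries K) (a : K) :
    σ = PowerSeries.C a + PowerSeries.X * τ ↔
      (PowerSeries.coeff 0 σ = a ∧ sderiv σ = τ) := by
  constructor
  · rintro rfl
    constructor
    · simp
    · ext k
      simp [sderiv, PowerSeries.coeff_C, PowerSeries.coeff_succ_X_mul]
  · rintro ⟨h0, hd⟩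
    ext k
    cases k with
    | zero => simpa using h0
    | succ k =>
      have := congrArg (PowerSeries.coeff k) hd
      simp only [sderiv, PowerSeries.coeff_mk] at this
      simp [PowerSeries.coeff_C, PowerSeries.coeff_succ_X_mul, this]

noncomputable def solCoeff {K : Type*} [Field K] {n : ℕ}
    (p : Fin n → MvPolynomial (Fin (n + 1)) K) (c : Fin n → K) : ℕ → Fin n → K
  | 0 => c
  | (k + 1) => fun i => PowerSeries.coeff k (polyEval (p i)
      (fun i' => PowerSeries.mk fun j => if _ : j ≤ k then solCoeff p c j i' else 0))
  termination_by k => k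
  decreasing_by omega

/-- Guarded polynomial systems have unique stream solutions, given by the
associated SDE initial value problem. -/
theorem guarded_system_unique_solution {K : Type*} [Field K] [CharZero K] {n : ℕ}
    (p : Fin n → MvPolynomial (Fin (n + 1)) K) (c : Fin n → K) :
    ∃ σ : Fin n → PowerSeries K,
      ((∀ i, σ i = PowerSeries.C (c i) + PowerSeries.X * polyEval (p i) σ) ∧
        ∀ σ₂ : Fin n → PowerSeries K,
          (∀ i, σ₂ i = PowerSeries.C (c i) + PowerSeries.X * polyEval (p i) σ₂) →
          σ₂ = σ) ∧
      ((∀ i, PowerSeries.coeff 0 (σ i) = c i ∧ sderiv (σ i) = polyEval (p i) σ) ∧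
        ∀ σ₂ : Fin n → PowerSeries K,
          (∀ i, PowerSeries.coeff 0 (σ₂ i) = c i ∧ sderiv (σ₂ i) = polyEval (p i) σ₂) →
          σ₂ = σ) := by
  set σ : Fin n → PowerSeries K := fun i => PowerSeries.mk fun k => solCoeff p c k i with hσ
  have hfix : ∀ i, σ i = PowerSeries.C (c i) + PowerSeries.X * polyEval (p i) σ := by
    intro i
    ext k
    cases k with
    | zero => simp [hσ, solCoeff, PowerSeries.coeff_C]
    | succ k =>
      have hrec : PowerSeries.coeff (k + 1) (σ i) =
          PowerSeries.coeff k (polyEval (p i)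
            (fun i' => PowerSeries.mk fun j => if _ : j ≤ k then solCoeff p c j i' else 0)) := by
        simp [hσ, solCoeff]
      rw [hrec, coeff_polyEval_congr (p i) _ σ k
        (fun i' j hj => by simp [hσ, hj])]
      simp [PowerSeries.coeff_C, PowerSeries.coeff_succ_X_mul]
  have huniq : ∀ σ₂ : Fin n → PowerSeries K,
      (∀ i, σ₂ i = PowerSeries.C (c i) + PowerSeries.X * polyEval (p i) σ₂) → σ₂ = σ := by
    intro σ₂ h2
    have key : ∀ k, ∀ i, PowerSeries.coeff k (σ₂ i) = PowerSeries.coeff k (σ i) := by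
      intro k
      induction k using Nat.strong_induction_on with
      | _ k ih =>
        intro i
        cases k with
        | zero =>
          rw [h2 i, hfix i]
          simp [PowerSeries.coeff_C]
        | succ k =>
          rw [h2 i, hfix i]
          simp only [map_add, PowerSeries.coeff_succ_X_mul, PowerSeries.coeff_C]
          congr 1
          exact coeff_polyEval_congr (p i) σ₂ σ k (fun i' j hj => ih j (by omega) i')
    funext i
    exact PowerSeries.ext fun k => key k i
  refine ⟨σ, ⟨hfix, huniq⟩, ⟨fun i => (guarded_iff _ _ _).mp (hfix i),
    fun σ₂ h2 => huniq σ₂ fun i => (guarded_iff _ _ _).mpr (h2 i)⟩⟩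
end
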